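/- Let Ω be a nonempty compact metric space and f : Ω → Ω a continuous map. Then, with values in EReal, the supremum over all open covers α of Ω of limsup_{n→∞} (log N(α⁽ⁿ⁾))/n equals the supremum over all ε > 0 of limsup_{n→∞} (log r(n,ε))/n, and also equals the supremum over all ε > 0 of limsup_{n→∞} (log s(n,ε))/n. (Since the inner quantities are antitone in ε, these suprema over ε > 0 coincide with the limits as ε → 0⁺; this is the equality of the four classical definitions of topological entropy.) -/
import Mathlib


open Filter Set Function

noncomputable section

variable {Ω : Type*}

/-- The Bowen (dynamical) metric `dₙ(x,y) = max_{0 ≤ t < n} d(f^[t] x, f^[t] y)`. -/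
def bowenDist [PseudoMetricSpace Ω] (f : Ω → Ω) (n : ℕ) (x y : Ω) : ℝ :=
  ⨆ t : Fin n, dist (f^[(t : ℕ)] x) (f^[(t : ℕ)] y)

/-- `A` is `(n,ε)`-spanning: every point of `Ω` is within Bowen distance `ε` of `A`. -/
def IsDynSpanning [PseudoMetricSpace Ω] (f : Ω → Ω) (n : ℕ) (ε : ℝ) (A : Set Ω) : Prop :=
  ∀ x : Ω, ∃ a ∈ A, bowenDist f n x a ≤ ε

/-- `A` is `(n,ε)`-separated: distinct points of `A` are more than `ε` apart
in the Bowen metric. -/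
def IsDynSeparated [PseudoMetricSpace Ω] (f : Ω → Ω) (n : ℕ) (ε : ℝ) (A : Set Ω) : Prop :=
  ∀ a ∈ A, ∀ a' ∈ A, a ≠ a' → ε < bowenDist f n a a'

/-- `r(n,ε)`: minimal cardinality of a finite `(n,ε)`-spanning subset of `Ω`. -/
def spanNum [PseudoMetricSpace Ω] (f : Ω → Ω) (n : ℕ) (ε : ℝ) : ℕ :=
  sInf {k : ℕ | ∃ A : Finset Ω, IsDynSpanning f n ε (↑A : Set Ω) ∧ A.card = k}

/-- `s(n,ε)`: maximal cardinality of a finite `(n,ε)`-separated subset of `Ω`. -/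
def sepNum [PseudoMetricSpace Ω] (f : Ω → Ω) (n : ℕ) (ε : ℝ) : ℕ :=
  sSup {k : ℕ | ∃ A : Finset Ω, IsDynSeparated f n ε (↑A : Set Ω) ∧ A.card = k}

/-- An open cover of `Ω`: a set of open sets whose union is all of `Ω`. -/
def IsOpenCover [TopologicalSpace Ω] (α : Set (Set Ω)) : Prop :=
  (∀ U ∈ α, IsOpen U) ∧ ⋃₀ α = univ

/-- The dynamical refinement `α⁽ⁿ⁾ = { U₀ ∩ f⁻¹ U₁ ∩ ⋯ ∩ f^[-(n-1)] U_{n-1} }`. -/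
def dynRefinement (f : Ω → Ω) (n : ℕ) (α : Set (Set Ω)) : Set (Set Ω) :=
  {V | ∃ U : Fin n → Set Ω, (∀ t, U t ∈ α) ∧ V = ⋂ t : Fin n, f^[(t : ℕ)] ⁻¹' U t}

/-- `N(β)`: minimal cardinality of a finite subcover of `β`. -/
def coverNum (β : Set (Set Ω)) : ℕ :=
  sInf {k : ℕ | ∃ γ : Finset (Set Ω), (↑γ : Set (Set Ω)) ⊆ β ∧
    ⋃₀ (↑γ : Set (Set Ω)) = univ ∧ γ.card = k}

section Aux
variable [MetricSpace Ω] (f : Ω → Ω)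

lemma bowenDist_nonneg (n : ℕ) (x y : Ω) : 0 ≤ bowenDist f n x y :=
  Real.iSup_nonneg fun _ => dist_nonneg

lemma bowenDist_le {n : ℕ} {x y : Ω} {ε : ℝ} (hε : 0 ≤ ε)
    (h : ∀ t < n, dist (f^[t] x) (f^[t] y) ≤ ε) : bowenDist f n x y ≤ ε :=
  Real.iSup_le (fun t => h t t.2) hε

lemma bowenDist_self (n : ℕ) (x : Ω) : bowenDist f n x x = 0 :=
  le_antisymm (bowenDist_le f le_rfl fun _ _ => by simp) (bowenDist_nonneg f n x x)

lemma bowenDist_comm (n : ℕ) (x y : Ω) : bowenDist f n x y = bowenDist f n y x := by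
  unfold bowenDist
  exact iSup_congr fun t => dist_comm _ _

lemma dist_le_bowenDist {n t : ℕ} (ht : t < n) (x y : Ω) :
    dist (f^[t] x) (f^[t] y) ≤ bowenDist f n x y :=
  le_ciSup (f := fun s : Fin n => dist (f^[(s:ℕ)] x) (f^[(s:ℕ)] y))
    (Set.Finite.bddAbove (Set.finite_range _)) (⟨t, ht⟩ : Fin n)

lemma bowenDist_triangle (n : ℕ) (x y z : Ω) :
    bowenDist f n x z ≤ bowenDist f n x y + bowenDist f n y z := by
  refine bowenDist_le f (add_nonneg (bowenDist_nonneg f n x y) (bowenDist_nonneg f n y z))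
    fun t ht => (dist_triangle _ (f^[t] y) _).trans
      (add_le_add (dist_le_bowenDist f ht x y) (dist_le_bowenDist f ht y z))

variable [CompactSpace Ω]

/-- Existence of a finite spanning set. -/
lemma exists_finset_spanning (hf : Continuous f) (n : ℕ) {ε : ℝ} (hε : 0 < ε) :
    ∃ A : Finset Ω, IsDynSpanning f n ε (↑A : Set Ω) := by
  set V : Ω → Set Ω := fun a => ⋂ t : Fin n, f^[(t : ℕ)] ⁻¹' Metric.ball (f^[(t : ℕ)] a) ε with hV
  have hopen : ∀ a, IsOpen (V a) := fun a =>
    isOpen_iInter_of_finite fun t => (Metric.isOpen_ball).preimage (hf.iterate _)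
  have hcov : (univ : Set Ω) ⊆ ⋃ a, V a := fun x _ =>
    mem_iUnion.2 ⟨x, mem_iInter.2 fun t => by simp [hε]⟩
  obtain ⟨S, hS⟩ := isCompact_univ.elim_finite_subcover V hopen hcov
  refine ⟨S, fun x => ?_⟩
  obtain ⟨a, haS, hax⟩ := mem_iUnion₂.1 (hS (mem_univ x))
  refine ⟨a, haS, bowenDist_le f hε.le fun t ht => ?_⟩
  have := mem_iInter.1 hax ⟨t, ht⟩
  exact (le_of_lt (by simpa [Metric.mem_ball, dist_comm] using this))

lemma spanNum_mem (hf : Continuous f) (n : ℕ) {ε : ℝ} (hε : 0 < ε) :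
    ∃ A : Finset Ω, IsDynSpanning f n ε (↑A : Set Ω) ∧ A.card = spanNum f n ε := by
  obtain ⟨A, hA⟩ := exists_finset_spanning f hf n hε
  obtain ⟨B, hB, hBc⟩ := Nat.sInf_mem (⟨A.card, A, hA, rfl⟩ :
    {k : ℕ | ∃ A : Finset Ω, IsDynSpanning f n ε (↑A : Set Ω) ∧ A.card = k}.Nonempty)
  exact ⟨B, hB, hBc⟩

omit [CompactSpace Ω] in
/-- Injection of a separated set into a spanning set of half radius. -/
lemma sep_card_le_span_card {n : ℕ} {ε μ : ℝ} (hμε : 2 * μ ≤ ε)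
    {A S : Finset Ω} (hA : IsDynSeparated f n ε (↑A : Set Ω))
    (hS : IsDynSpanning f n μ (↑S : Set Ω)) : A.card ≤ S.card := by
  classical
  have hchoice : ∀ a : Ω, ∃ s, s ∈ S ∧ bowenDist f n a s ≤ μ := fun a => by
    obtain ⟨s, hs, h⟩ := hS a; exact ⟨s, hs, h⟩
  set g : Ω → Ω := fun a => Classical.choose (hchoice a) with hg
  have hgS : ∀ a, g a ∈ S := fun a => (Classical.choose_spec (hchoice a)).1
  have hgd : ∀ a, bowenDist f n a (g a) ≤ μ := fun a => (Classical.choose_spec (hchoice a)).2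
  refine Finset.card_le_card_of_injOn g (fun a _ => hgS a) ?_
  intro a ha a' ha' hgg
  by_contra hne
  have h1 : ε < bowenDist f n a a' := hA a ha a' ha' hne
  have h2 : bowenDist f n a a' ≤ bowenDist f n a (g a) + bowenDist f n (g a') a' := by
    rw [hgg]; exact bowenDist_triangle f n a (g a') a'
  have h3 : bowenDist f n (g a') a' ≤ μ := (bowenDist_comm f n (g a') a') ▸ hgd a'
  linarith [hgd a]

lemma sepNum_bddAbove (hf : Continuous f) (n : ℕ) {ε : ℝ} (hε : 0 < ε) :
    BddAbove {k : ℕ | ∃ A : Finset Ω, IsDynSeparated f n ε (↑A : Set Ω) ∧ A.card = k} := by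
  obtain ⟨S, hS⟩ := exists_finset_spanning f hf n (half_pos hε)
  exact ⟨S.card, fun k ⟨A, hA, hAc⟩ => hAc ▸ sep_card_le_span_card f (by linarith) hA hS⟩

lemma sepNum_mem (hf : Continuous f) (n : ℕ) {ε : ℝ} (hε : 0 < ε) :
    ∃ A : Finset Ω, IsDynSeparated f n ε (↑A : Set Ω) ∧ A.card = sepNum f n ε := by
  have hne : {k : ℕ | ∃ A : Finset Ω, IsDynSeparated f n ε (↑A : Set Ω) ∧ A.card = k}.Nonempty :=
    ⟨0, ∅, fun a ha => by simp at ha, rfl⟩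
  obtain ⟨A, hA, hAc⟩ := Nat.sSup_mem hne (sepNum_bddAbove f hf n hε)
  exact ⟨A, hA, hAc⟩

lemma card_le_sepNum (hf : Continuous f) {n : ℕ} {ε : ℝ} (hε : 0 < ε)
    {A : Finset Ω} (hA : IsDynSeparated f n ε (↑A : Set Ω)) : A.card ≤ sepNum f n ε :=
  le_csSup (sepNum_bddAbove f hf n hε) ⟨A, hA, rfl⟩

lemma spanNum_le_sepNum (hf : Continuous f) (n : ℕ) {ε : ℝ} (hε : 0 < ε) :
    spanNum f n ε ≤ sepNum f n ε := by
  classical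
  obtain ⟨A, hA, hAc⟩ := sepNum_mem f hf n hε
  refine Nat.sInf_le ⟨A, fun x => ?_, hAc⟩
  by_cases hx : x ∈ A
  · exact ⟨x, by simpa using hx, by rw [bowenDist_self]; exact hε.le⟩
  by_contra hcon
  push_neg at hcon
  have hsep : IsDynSeparated f n ε (↑(insert x A) : Set Ω) := by
    intro a ha a' ha' hne
    simp only [Finset.coe_insert, Set.mem_insert_iff, Finset.mem_coe] at ha ha'
    rcases ha with rfl | ha
    · rcases ha' with rfl | ha'
      · exact absurd rfl hne
      · exact hcon a' (by simpa using ha')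
    · rcases ha' with rfl | ha'
      · rw [bowenDist_comm]
        exact hcon a (by simpa using ha)
      · exact hA a (by simpa using ha) a' (by simpa using ha') hne
  have hcard : (insert x A).card = A.card + 1 := Finset.card_insert_of_notMem hx
  have := card_le_sepNum f hf hε hsep
  omega

lemma sepNum_le_spanNum_half (hf : Continuous f) (n : ℕ) {ε : ℝ} (hε : 0 < ε) :
    sepNum f n ε ≤ spanNum f n (ε / 2) := by
  obtain ⟨S, hS, hSc⟩ := spanNum_mem f hf n (half_pos hε)
  refine csSup_le ⟨0, ∅, fun a ha => by simp at ha, rfl⟩ fun k ⟨A, hA, hAc⟩ => ?_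
  rw [← hAc, ← hSc]
  exact sep_card_le_span_card f (by linarith) hA hS

lemma spanNum_pos [Nonempty Ω] (hf : Continuous f) (n : ℕ) {ε : ℝ} (hε : 0 < ε) :
    0 < spanNum f n ε := by
  obtain ⟨A, hA, hAc⟩ := spanNum_mem f hf n hε
  rcases hA (Classical.arbitrary Ω) with ⟨a, ha, -⟩
  rw [← hAc]
  exact Finset.card_pos.2 ⟨a, ha⟩

lemma sepNum_pos [Nonempty Ω] (hf : Continuous f) (n : ℕ) {ε : ℝ} (hε : 0 < ε) :
    0 < sepNum f n ε :=
  lt_of_lt_of_le (spanNum_pos f hf n hε) (spanNum_le_sepNum f hf n hε)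

omit [CompactSpace Ω] in
lemma dynRefinement_isOpenCover (hf : Continuous f) {α : Set (Set Ω)} (hα : IsOpenCover α)
    (n : ℕ) : IsOpenCover (dynRefinement f n α) := by
  constructor
  · rintro V ⟨U, hU, rfl⟩
    exact isOpen_iInter_of_finite fun t => (hα.1 _ (hU t)).preimage (hf.iterate _)
  · refine eq_univ_of_forall fun x => ?_
    have h : ∀ t : Fin n, ∃ U ∈ α, f^[(t : ℕ)] x ∈ U := by
      intro t
      have hx : f^[(t : ℕ)] x ∈ ⋃₀ α := hα.2.symm ▸ mem_univ _
      exact mem_sUnion.1 hx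
    choose U hU hxU using h
    exact ⟨_, ⟨U, hU, rfl⟩, mem_iInter.2 fun t => hxU t⟩

omit [MetricSpace Ω] in
lemma exists_finset_subcover [TopologicalSpace Ω] [CompactSpace Ω] {β : Set (Set Ω)}
    (hβ : IsOpenCover β) :
    ∃ γ : Finset (Set Ω), (↑γ : Set (Set Ω)) ⊆ β ∧ ⋃₀ (↑γ : Set (Set Ω)) = univ ∧
      γ.card = coverNum β := by
  classical
  have hcov : (univ : Set Ω) ⊆ ⋃ U : β, (U : Set Ω) := by
    rw [← Set.sUnion_eq_iUnion, hβ.2]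
  obtain ⟨t, ht⟩ := isCompact_univ.elim_finite_subcover (fun U : β => (U : Set Ω))
    (fun U => hβ.1 U U.2) hcov
  set γ0 : Finset (Set Ω) := t.image Subtype.val with hγ0
  have hsub : (↑γ0 : Set (Set Ω)) ⊆ β := by
    intro V hV
    simp only [hγ0, Finset.coe_image, Set.mem_image, Finset.mem_coe] at hV
    obtain ⟨U, -, rfl⟩ := hV
    exact U.2
  have hun : ⋃₀ (↑γ0 : Set (Set Ω)) = univ := by
    refine eq_univ_of_forall fun x => ?_
    obtain ⟨U, hUt, hxU⟩ := mem_iUnion₂.1 (ht (mem_univ x))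
    exact ⟨U, Finset.mem_coe.2 (Finset.mem_image_of_mem Subtype.val hUt), hxU⟩
  have hne : {k : ℕ | ∃ γ : Finset (Set Ω), (↑γ : Set (Set Ω)) ⊆ β ∧
      ⋃₀ (↑γ : Set (Set Ω)) = univ ∧ γ.card = k}.Nonempty := ⟨γ0.card, γ0, hsub, hun, rfl⟩
  obtain ⟨γ, h1, h2, h3⟩ := Nat.sInf_mem hne
  exact ⟨γ, h1, h2, h3⟩

omit [MetricSpace Ω] in
lemma coverNum_pos [TopologicalSpace Ω] [CompactSpace Ω] [Nonempty Ω] {β : Set (Set Ω)}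
    (hβ : IsOpenCover β) : 0 < coverNum β := by
  obtain ⟨γ, -, hun, hc⟩ := exists_finset_subcover hβ
  have hx : (Classical.arbitrary Ω) ∈ ⋃₀ (↑γ : Set (Set Ω)) := hun.symm ▸ mem_univ _
  obtain ⟨V, hV, -⟩ := hx
  rw [← hc]
  exact Finset.card_pos.2 ⟨V, hV⟩

lemma coverNum_le_spanNum (hf : Continuous f) {α : Set (Set Ω)} {δ μ : ℝ} (hμ : 0 < μ)
    (hμδ : μ < δ) (hLeb : ∀ x : Ω, ∃ U ∈ α, Metric.ball x δ ⊆ U) (n : ℕ) :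
    coverNum (dynRefinement f n α) ≤ spanNum f n μ := by
  classical
  obtain ⟨S, hS, hSc⟩ := spanNum_mem f hf n hμ
  choose U hUα hUb using fun x : Ω => hLeb x
  set V : Ω → Set Ω := fun a => ⋂ t : Fin n, f^[(t : ℕ)] ⁻¹' U (f^[(t : ℕ)] a) with hV
  set γ : Finset (Set Ω) := S.image V with hγ
  have hsub : (↑γ : Set (Set Ω)) ⊆ dynRefinement f n α := by
    intro W hW
    simp only [hγ, Finset.coe_image, Set.mem_image, Finset.mem_coe] at hW
    obtain ⟨a, -, rfl⟩ := hW
    exact ⟨fun t => U (f^[(t : ℕ)] a), fun t => hUα _, rfl⟩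
  have hun : ⋃₀ (↑γ : Set (Set Ω)) = univ := by
    refine eq_univ_of_forall fun x => ?_
    obtain ⟨a, haS, hax⟩ := hS x
    refine ⟨V a, by simp [hγ, Finset.mem_image]; exact ⟨a, haS, rfl⟩, ?_⟩
    refine mem_iInter.2 fun t => hUb (f^[(t : ℕ)] a) ?_
    have := dist_le_bowenDist f t.2 x a
    exact Metric.mem_ball.2 (by linarith)
  calc coverNum (dynRefinement f n α) ≤ γ.card := Nat.sInf_le ⟨γ, hsub, hun, rfl⟩
    _ ≤ S.card := Finset.card_image_le
    _ = spanNum f n μ := hSc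

lemma sepNum_le_coverNum (hf : Continuous f) {α : Set (Set Ω)} (hα : IsOpenCover α)
    {ε : ℝ} (hε : 0 < ε) (hsmall : ∀ U ∈ α, ∀ x ∈ U, ∀ y ∈ U, dist x y ≤ ε) (n : ℕ) :
    sepNum f n ε ≤ coverNum (dynRefinement f n α) := by
  classical
  obtain ⟨γ, hsub, hun, hc⟩ := exists_finset_subcover (dynRefinement_isOpenCover f hf hα n)
  refine csSup_le ⟨0, ∅, fun a ha => by simp at ha, rfl⟩ fun k hk => ?_
  obtain ⟨A, hA, rfl⟩ := hk
  rw [← hc]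
  have hchoice : ∀ a : Ω, ∃ W, W ∈ γ ∧ a ∈ W := fun a => by
    obtain ⟨W, hW, haW⟩ := mem_sUnion.1 (hun.symm ▸ mem_univ a)
    exact ⟨W, hW, haW⟩
  set g : Ω → Set Ω := fun a => Classical.choose (hchoice a) with hg
  have hgγ : ∀ a, g a ∈ γ := fun a => (Classical.choose_spec (hchoice a)).1
  have hga : ∀ a, a ∈ g a := fun a => (Classical.choose_spec (hchoice a)).2
  refine Finset.card_le_card_of_injOn g (fun a _ => hgγ a) ?_
  intro a ha a' ha' hgg
  by_contra hne
  have h1 : ε < bowenDist f n a a' := hA a ha a' ha' hne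
  obtain ⟨W, hWt, hWeq⟩ := hsub (Finset.mem_coe.2 (hgγ a))
  have haW : a ∈ ⋂ t : Fin n, f^[(t : ℕ)] ⁻¹' W t := hWeq ▸ hga a
  have haW' : a' ∈ ⋂ t : Fin n, f^[(t : ℕ)] ⁻¹' W t := by
    rw [← hWeq, hgg]; exact hga a'
  have h2 : bowenDist f n a a' ≤ ε := by
    refine bowenDist_le f hε.le fun t ht => ?_
    exact hsmall (W ⟨t, ht⟩) (hWt ⟨t, ht⟩) _ (mem_iInter.1 haW ⟨t, ht⟩) _
      (mem_iInter.1 haW' ⟨t, ht⟩)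
  linarith

lemma limsup_log_mono {u v : ℕ → ℕ} (hu : ∀ n, 0 < u n) (h : ∀ n, u n ≤ v n) :
    Filter.limsup (fun n : ℕ => ((Real.log (u n) / n : ℝ) : EReal)) Filter.atTop ≤
      Filter.limsup (fun n : ℕ => ((Real.log (v n) / n : ℝ) : EReal)) Filter.atTop := by
  refine Filter.limsup_le_limsup (Filter.Eventually.of_forall fun n => ?_)
  rw [EReal.coe_le_coe_iff]
  rcases Nat.eq_zero_or_pos n with rfl | hn
  · simp
  · have hlog : Real.log (u n) ≤ Real.log (v n) :=
      Real.log_le_log (by exact_mod_cast hu n) (by exact_mod_cast h n)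
    gcongr

end Aux

/-- The four classical definitions of topological entropy agree: the supremum over open
covers of the exponential growth rate of `N(α⁽ⁿ⁾)` equals the supremum over `ε > 0` of the
growth rate of the spanning numbers `r(n,ε)`, and equals the supremum over `ε > 0` of the
growth rate of the separation numbers `s(n,ε)`. -/
theorem entropy_defs_agree [MetricSpace Ω] [CompactSpace Ω] [Nonempty Ω]
    (f : Ω → Ω) (hf : Continuous f) :
    (⨆ (α : Set (Set Ω)) (_ : IsOpenCover α),
        Filter.limsup (fun n : ℕ =>
          ((Real.log (coverNum (dynRefinement f n α)) / n : ℝ) : EReal)) Filter.atTop)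
      = (⨆ (ε : ℝ) (_ : 0 < ε),
          Filter.limsup (fun n : ℕ =>
            ((Real.log (spanNum f n ε) / n : ℝ) : EReal)) Filter.atTop) ∧
    (⨆ (ε : ℝ) (_ : 0 < ε),
        Filter.limsup (fun n : ℕ =>
          ((Real.log (spanNum f n ε) / n : ℝ) : EReal)) Filter.atTop)
      = (⨆ (ε : ℝ) (_ : 0 < ε),
          Filter.limsup (fun n : ℕ =>
            ((Real.log (sepNum f n ε) / n : ℝ) : EReal)) Filter.atTop) := by
  have hBC : (⨆ (ε : ℝ) (_ : 0 < ε),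
      Filter.limsup (fun n : ℕ =>
        ((Real.log (spanNum f n ε) / n : ℝ) : EReal)) Filter.atTop) ≤
      ⨆ (ε : ℝ) (_ : 0 < ε),
        Filter.limsup (fun n : ℕ =>
          ((Real.log (sepNum f n ε) / n : ℝ) : EReal)) Filter.atTop := by
    refine iSup₂_le fun ε hε => ?_
    exact le_trans (limsup_log_mono (fun n => spanNum_pos f hf n hε)
      (fun n => spanNum_le_sepNum f hf n hε)) (le_iSup₂_of_le ε hε le_rfl)
  have hCB : (⨆ (ε : ℝ) (_ : 0 < ε),
      Filter.limsup (fun n : ℕ =>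
        ((Real.log (sepNum f n ε) / n : ℝ) : EReal)) Filter.atTop) ≤
      ⨆ (ε : ℝ) (_ : 0 < ε),
        Filter.limsup (fun n : ℕ =>
          ((Real.log (spanNum f n ε) / n : ℝ) : EReal)) Filter.atTop := by
    refine iSup₂_le fun ε hε => ?_
    exact le_trans (limsup_log_mono (fun n => sepNum_pos f hf n hε)
      (fun n => sepNum_le_spanNum_half f hf n hε))
      (le_iSup₂_of_le (ε / 2) (half_pos hε) le_rfl)
  have hAB : (⨆ (α : Set (Set Ω)) (_ : IsOpenCover α),
      Filter.limsup (fun n : ℕ =>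
        ((Real.log (coverNum (dynRefinement f n α)) / n : ℝ) : EReal)) Filter.atTop) ≤
      ⨆ (ε : ℝ) (_ : 0 < ε),
        Filter.limsup (fun n : ℕ =>
          ((Real.log (spanNum f n ε) / n : ℝ) : EReal)) Filter.atTop := by
    refine iSup₂_le fun α hα => ?_
    obtain ⟨δ, hδ, hLeb⟩ := lebesgue_number_lemma_of_metric_sUnion isCompact_univ hα.1
      hα.2.symm.subset
    refine le_trans (limsup_log_mono
      (fun n => coverNum_pos (dynRefinement_isOpenCover f hf hα n))
      (fun n => coverNum_le_spanNum f hf (half_pos hδ) (half_lt_self hδ)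
        (fun x => hLeb x (mem_univ x)) n))
      (le_iSup₂_of_le (δ / 2) (half_pos hδ) le_rfl)
  have hCA : (⨆ (ε : ℝ) (_ : 0 < ε),
      Filter.limsup (fun n : ℕ =>
        ((Real.log (sepNum f n ε) / n : ℝ) : EReal)) Filter.atTop) ≤
      ⨆ (α : Set (Set Ω)) (_ : IsOpenCover α),
        Filter.limsup (fun n : ℕ =>
          ((Real.log (coverNum (dynRefinement f n α)) / n : ℝ) : EReal)) Filter.atTop := by
    refine iSup₂_le fun ε hε => ?_
    set α : Set (Set Ω) := (fun x : Ω => Metric.ball x (ε / 2)) '' univ with hαdef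
    have hα : IsOpenCover α := by
      constructor
      · rintro U ⟨x, -, rfl⟩
        exact Metric.isOpen_ball
      · exact eq_univ_of_forall fun x => ⟨Metric.ball x (ε / 2), ⟨x, mem_univ x, rfl⟩,
          Metric.mem_ball_self (half_pos hε)⟩
    have hsmall : ∀ U ∈ α, ∀ x ∈ U, ∀ y ∈ U, dist x y ≤ ε := by
      rintro U ⟨z, -, rfl⟩ x hx y hy
      have h1 := Metric.mem_ball.1 hx
      have h2 := Metric.mem_ball.1 hy
      have h3 : dist x y ≤ dist x z + dist z y := dist_triangle x z y
      rw [dist_comm z y] at h3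
      linarith
    exact le_trans (limsup_log_mono (fun n => sepNum_pos f hf n hε)
      (fun n => sepNum_le_coverNum f hf hα hε hsmall n)) (le_iSup₂_of_le α hα le_rfl)
  exact ⟨le_antisymm hAB (hBC.trans hCA), le_antisymm hBC hCB⟩
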